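/- Let Ω ⊂ ℝ² be open and b : Ω → ℝ² locally Lipschitz continuous. Let v : Ω → ℝ be upper semicontinuous and a viscosity subsolution of −b·Dv = 0 in Ω (i.e., for every C¹ function φ on Ω and every z ∈ Ω at which v − φ attains a local maximum, −b(z)·Dφ(z) ≤ 0). Let X : ℝ → Ω be a C¹ periodic solution of X′(t) = b(X(t)). Then v is constant along the orbit: v(X(s)) = v(X(t)) for all s, t ∈ ℝ. Likewise, a lower semicontinuous viscosity supersolution w of −b·Dw = 0 in Ω (for every C¹ φ and local minimum point z of w − φ, −b(z)·Dφ(z) ≥ 0) is constant along every such periodic orbit. -/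

import Mathlib

open Filter Topology Set Metric

noncomputable section

/-- The plane `ℝ²` as a Euclidean space. -/
abbrev E2 : Type := EuclideanSpace ℝ (Fin 2)

/-- An upper semicontinuous function on an open set attains its maximum on any
nonempty compact subset. -/
lemma usc_exists_max {α : Type*} [TopologicalSpace α] {U K : Set α} (hU : IsOpen U)
    (hK : IsCompact K) (hKU : K ⊆ U) (hne : K.Nonempty) {f : α → ℝ}
    (hf : UpperSemicontinuousOn f U) : ∃ x ∈ K, ∀ y ∈ K, f y ≤ f x := by
  by_contra hcon
  push_neg at hcon
  have hVopen : ∀ c : ℝ, IsOpen {z | z ∈ U ∧ f z < c} := by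
    intro c
    rw [isOpen_iff_mem_nhds]
    rintro z ⟨hzU, hz⟩
    have h := hf z hzU c hz
    rw [hU.nhdsWithin_eq hzU] at h
    filter_upwards [h, hU.mem_nhds hzU] with x h1 h2 using ⟨h2, h1⟩
  choose y hyK hlt using hcon
  obtain ⟨tfin, htfin⟩ := hK.elim_finite_subcover
      (fun i : K => {z | z ∈ U ∧ f z < f (y i i.2)}) (fun i => hVopen _)
      (fun x hx => mem_iUnion.2 ⟨⟨x, hx⟩, hKU hx, hlt x hx⟩)
  obtain ⟨x₀, hx₀⟩ := hne
  have hx₀' := htfin hx₀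
  rw [mem_iUnion₂] at hx₀'
  obtain ⟨i₀, hi₀t, _⟩ := hx₀'
  obtain ⟨j, hjt, hjmax⟩ := tfin.exists_max_image (fun i => f (y i i.2)) ⟨i₀, hi₀t⟩
  have h1 := htfin (hyK j j.2)
  rw [mem_iUnion₂] at h1
  obtain ⟨i, hit, _, hlt2⟩ := h1
  exact absurd (hjmax i hit) (not_le.2 hlt2)

/-- The gradient of `x ↦ ε⁻¹ * ‖x - c‖ ^ 2`. -/
lemma hasGradientAt_quad (ε : ℝ) (c a : E2) :
    HasGradientAt (fun x : E2 => ε⁻¹ * ‖x - c‖ ^ 2) ((2 * ε⁻¹) • (a - c)) a := by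
  rw [hasGradientAt_iff_hasFDerivAt]
  have h1 : HasFDerivAt (fun x : E2 => ‖x - c‖ ^ 2)
      ((2 : ℕ) • (innerSL ℝ (a - c)).comp (ContinuousLinearMap.id ℝ E2)) a := by
    simpa using ((hasFDerivAt_id a).sub_const c).norm_sq
  have h2 := h1.const_mul ε⁻¹
  convert h2 using 1
  · rfl
  apply ContinuousLinearMap.ext
  intro z
  simp only [ContinuousLinearMap.smul_apply, ContinuousLinearMap.coe_comp',
    Function.comp_apply, ContinuousLinearMap.coe_id', id_eq, innerSL_apply_apply,
    InnerProductSpace.toDual_apply_apply, smul_eq_mul, nsmul_eq_mul, Nat.cast_ofNat]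
  rw [real_inner_smul_left]
  ring

set_option maxHeartbeats 1000000 in
/-- Key monotonicity lemma: a viscosity subsolution of `-b·Dv = 0` is nondecreasing
along periodic orbits of `b`. -/
lemma mono_along
    (Ω : Set E2) (hΩ : IsOpen Ω)
    (b : E2 → E2)
    (hb : ∀ x ∈ Ω, ∃ K : NNReal, ∃ s ∈ nhdsWithin x Ω, LipschitzOnWith K b s)
    (v : E2 → ℝ)
    (hv : UpperSemicontinuousOn v Ω)
    (hvsub : ∀ φ : E2 → ℝ, ContDiff ℝ 1 φ → ∀ z ∈ Ω,
      IsLocalMaxOn (fun x => v x - φ x) Ω z →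
      -(inner ℝ (b z) (gradient φ z) : ℝ) ≤ 0)
    (X : ℝ → E2) (hXΩ : ∀ t : ℝ, X t ∈ Ω)
    (hX : ∀ t : ℝ, HasDerivAt X (b (X t)) t)
    (T : ℝ) (hT : 0 < T) (hper : Function.Periodic X T) :
    ∀ s t : ℝ, s ≤ t → v (X s) ≤ v (X t) := by
  -- Setup: the orbit, a compact thickening inside Ω, uniform Lipschitz data, bound for v
  have Xcont : Continuous X := by
    rw [continuous_iff_continuousAt]; exact fun t => (hX t).continuousAt
  set O : Set E2 := X '' Icc 0 T with hOdef
  have hOcomp : IsCompact O := isCompact_Icc.image Xcont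
  have hOsub : O ⊆ Ω := by rintro _ ⟨τ, _, rfl⟩; exact hXΩ τ
  have hmemO : ∀ τ : ℝ, X τ ∈ O := by
    intro τ
    obtain ⟨y, hy, hxy⟩ := hper.exists_mem_Ico₀ hT τ
    exact ⟨y, Ico_subset_Icc_self hy, hxy.symm⟩
  obtain ⟨r, hr, hKsub⟩ := hOcomp.exists_cthickening_subset_open hΩ hOsub
  set K : Set E2 := cthickening r O with hKdef
  have hKcomp : IsCompact K := hOcomp.cthickening
  have hOK : O ⊆ K := self_subset_cthickening O
  have hballK : ∀ (τ : ℝ) (y : E2), dist y (X τ) ≤ r → y ∈ K := fun τ y h =>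
    mem_cthickening_of_dist_le y (X τ) r O (hmemO τ) h
  -- uniform local Lipschitz bound near the orbit
  obtain ⟨L, hL0, δL, hδL, hLip⟩ : ∃ L : ℝ, 0 ≤ L ∧ ∃ δL : ℝ, 0 < δL ∧ ∀ (τ : ℝ) (y : E2),
      dist y (X τ) ≤ δL → dist (b y) (b (X τ)) ≤ L * dist y (X τ) := by
    have hloc : ∀ z : O, ∃ ρ : ℝ, 0 < ρ ∧ ∃ Kz : NNReal,
        LipschitzOnWith Kz b (ball (z : E2) ρ) := by
      rintro ⟨z, hz⟩
      obtain ⟨Kz, sz, hs, hlips⟩ := hb z (hOsub hz)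
      rw [hΩ.nhdsWithin_eq (hOsub hz)] at hs
      obtain ⟨ρ, hρ, hball⟩ := Metric.mem_nhds_iff.1 hs
      exact ⟨ρ, hρ, Kz, hlips.mono hball⟩
    choose ρ hρ KL hKL using hloc
    obtain ⟨tfin, htfin⟩ := hOcomp.elim_finite_subcover
        (fun i : O => ball (i : E2) (ρ i / 2)) (fun i => isOpen_ball)
        (fun x hx => mem_iUnion.2 ⟨⟨x, hx⟩, mem_ball_self (half_pos (hρ ⟨x, hx⟩))⟩)
    have htne : tfin.Nonempty := by
      have h0 := htfin (hmemO 0)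
      rw [mem_iUnion₂] at h0
      obtain ⟨i, hit, _⟩ := h0
      exact ⟨i, hit⟩
    refine ⟨tfin.sup' htne (fun i => (KL i : ℝ)), ?_, tfin.inf' htne (fun i => ρ i / 2), ?_, ?_⟩
    · obtain ⟨j, hjt⟩ := htne
      exact le_trans (KL j).coe_nonneg (Finset.le_sup' (fun i => (KL i : ℝ)) hjt)
    · rw [Finset.lt_inf'_iff]
      exact fun i _ => half_pos (hρ i)
    · intro τ y hdist
      have hXτ := htfin (hmemO τ)
      rw [mem_iUnion₂] at hXτ
      obtain ⟨i, hit, hXi⟩ := hXτ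
      rw [mem_ball] at hXi
      have hδρ : tfin.inf' htne (fun i => ρ i / 2) ≤ ρ i / 2 := Finset.inf'_le _ hit
      have hyi : y ∈ ball (i : E2) (ρ i) := by
        rw [mem_ball]
        calc dist y (i : E2) ≤ dist y (X τ) + dist (X τ) (i : E2) := dist_triangle _ _ _
          _ < ρ i / 2 + ρ i / 2 := by
              have := hdist.trans hδρ
              linarith [hXi, this]
          _ = ρ i := by ring
      have hXτi : X τ ∈ ball (i : E2) (ρ i) := by
        rw [mem_ball]; linarith [hXi, half_pos (hρ i)]
      have h1 := (hKL i).dist_le_mul y hyi (X τ) hXτi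
      calc dist (b y) (b (X τ)) ≤ (KL i : ℝ) * dist y (X τ) := h1
        _ ≤ tfin.sup' htne (fun i => (KL i : ℝ)) * dist y (X τ) :=
            mul_le_mul_of_nonneg_right (Finset.le_sup' (fun i => (KL i : ℝ)) hit) dist_nonneg
  -- bound for v on K
  obtain ⟨xM, hxM, hM⟩ := usc_exists_max hΩ hKcomp hKsub ⟨X 0, hOK (hmemO 0)⟩ hv
  -- main estimate
  suffices key : ∀ s t : ℝ, s ≤ t → ∀ γ > (0:ℝ), ∀ η > (0:ℝ),
      v (X s) ≤ v (X t) + (γ + η * (t - s)) by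
    intro s t hst
    apply le_of_forall_pos_le_add
    intro e he
    have hd : (0:ℝ) ≤ t - s := by linarith
    have hden : (0:ℝ) < 2 * (t - s) + 2 := by linarith
    have hη : (0:ℝ) < e / (2 * (t - s) + 2) := by positivity
    have h1 := key s t hst (e / 2) (by linarith) (e / (2 * (t - s) + 2)) hη
    have h2 : e / (2 * (t - s) + 2) * (t - s) ≤ e / 2 := by
      rw [div_mul_eq_mul_div, div_le_div_iff₀ hden (by norm_num)]
      nlinarith
    linarith
  intro s t hst γ hγ η hη
  -- upper semicontinuity of v at X t
  have husc := hv (X t) (hXΩ t) (v (X t) + γ) (by linarith)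
  rw [hΩ.nhdsWithin_eq (hXΩ t)] at husc
  obtain ⟨ρ, hρpos, hρ⟩ := Metric.eventually_nhds_iff.1 husc
  -- the doubling functional and its maximizers
  set D : Set (E2 × ℝ) := K ×ˢ Icc s t with hDdef
  have hDcomp : IsCompact D := hKcomp.prod isCompact_Icc
  have hXsD : ((X s, s) : E2 × ℝ) ∈ D := ⟨hOK (hmemO s), le_refl s, hst⟩
  have hDmem : ∀ (x : E2) (τ : ℝ), x ∈ K → τ ∈ Icc s t → ((x, τ) : E2 × ℝ) ∈ D :=
    fun x τ h1 h2 => ⟨h1, h2⟩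
  set F : ℝ → E2 × ℝ → ℝ := fun ε p => v p.1 - ε⁻¹ * ‖p.1 - X p.2‖ ^ 2 + η * p.2 with hFdef
  have hFeq : ∀ (ε : ℝ) (p : E2 × ℝ), F ε p = v p.1 - ε⁻¹ * ‖p.1 - X p.2‖ ^ 2 + η * p.2 :=
    fun _ _ => rfl
  have hFusc : ∀ ε : ℝ, UpperSemicontinuousOn (F ε) (Ω ×ˢ (univ : Set ℝ)) := by
    intro ε p hp
    have h1 : UpperSemicontinuousWithinAt (fun q : E2 × ℝ => v q.1)
        (Ω ×ˢ (univ : Set ℝ)) p := by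
      intro y hy
      have h := hv p.1 hp.1 y hy
      have ht : Tendsto Prod.fst (𝓝[Ω ×ˢ (univ : Set ℝ)] p) (𝓝[Ω] p.1) :=
        continuous_fst.continuousWithinAt.tendsto_nhdsWithin (fun q hq => hq.1)
      exact ht.eventually h
    have hcont2 : Continuous (fun q : E2 × ℝ => -(ε⁻¹ * ‖q.1 - X q.2‖ ^ 2) + η * q.2) :=
      ((continuous_const.mul
        (((continuous_fst.sub (Xcont.comp continuous_snd)).norm).pow 2)).neg).add
        (continuous_const.mul continuous_snd)
    have h2 := h1.add hcont2.continuousWithinAt.upperSemicontinuousWithinAt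
    have heq : (fun q : E2 × ℝ => v q.1 + (-(ε⁻¹ * ‖q.1 - X q.2‖ ^ 2) + η * q.2)) = F ε := by
      funext q; rw [hFeq]; ring
    rwa [heq] at h2
  have hU'open : IsOpen (Ω ×ˢ (univ : Set ℝ)) := hΩ.prod isOpen_univ
  have hDsubU' : D ⊆ Ω ×ˢ (univ : Set ℝ) := fun p hp => ⟨hKsub hp.1, trivial⟩
  have hmaxall : ∀ ε : ℝ, ∃ p : E2 × ℝ, p ∈ D ∧ (0 < ε → ∀ q ∈ D, F ε q ≤ F ε p) := by
    intro ε
    obtain ⟨p, hpD, hp⟩ := usc_exists_max hU'open hDcomp hDsubU' ⟨_, hXsD⟩ (hFusc ε)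
    exact ⟨p, hpD, fun _ => hp⟩
  choose P hPD hPmax using hmaxall
  have hPK : ∀ ε : ℝ, (P ε).1 ∈ K := fun ε => (hPD ε).1
  have hPτ : ∀ ε : ℝ, (P ε).2 ∈ Icc s t := fun ε => (hPD ε).2
  clear_value F
  set Mf : ℝ → ℝ := fun ε => F ε (P ε) with hMfdef
  set dsq : ℝ → ℝ := fun ε => ‖(P ε).1 - X (P ε).2‖ ^ 2 with hdsqdef
  have hMfF : ∀ ε : ℝ, Mf ε = F ε (P ε) := fun _ => rfl
  have hdsqeq : ∀ ε : ℝ, dsq ε = ‖(P ε).1 - X (P ε).2‖ ^ 2 := fun _ => rfl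
  clear_value Mf dsq
  have hMfeq : ∀ ε : ℝ, Mf ε = v (P ε).1 - ε⁻¹ * dsq ε + η * (P ε).2 := by
    intro ε; rw [hMfF, hFeq, hdsqeq]
  have hdsq0 : ∀ ε : ℝ, 0 ≤ dsq ε := fun ε => by rw [hdsqeq]; positivity
  have hlower : ∀ ε : ℝ, 0 < ε → v (X s) + η * s ≤ Mf ε := by
    intro ε hε
    have h := hPmax ε hε _ hXsD
    rw [← hMfF, hFeq] at h
    simpa using h
  have hupper : ∀ ε : ℝ, 0 < ε → Mf ε ≤ v xM + η * t := by
    intro ε hε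
    rw [hMfeq]
    have h1 : v (P ε).1 ≤ v xM := hM _ (hPK ε)
    have h2 : 0 ≤ ε⁻¹ * dsq ε := mul_nonneg (by positivity) (hdsq0 ε)
    have h3 : η * (P ε).2 ≤ η * t := mul_le_mul_of_nonneg_left (hPτ ε).2 hη.le
    linarith
  set C : ℝ := v xM + η * t - (v (X s) + η * s) with hCdef
  clear_value C
  have hC0 : 0 ≤ C := by
    rw [hCdef]
    have := (hlower 1 one_pos).trans (hupper 1 one_pos); linarith
  have hdsqC : ∀ ε : ℝ, 0 < ε → dsq ε ≤ ε * C := by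
    intro ε hε
    have h1 := hlower ε hε
    rw [hMfeq] at h1
    have h2 : v (P ε).1 ≤ v xM := hM _ (hPK ε)
    have h3 : η * (P ε).2 ≤ η * t := mul_le_mul_of_nonneg_left (hPτ ε).2 hη.le
    have h4 : ε⁻¹ * dsq ε ≤ C := by rw [hCdef]; linarith
    calc dsq ε = ε * (ε⁻¹ * dsq ε) := by field_simp
      _ ≤ ε * C := mul_le_mul_of_nonneg_left h4 hε.le
  have hgap : ∀ ε : ℝ, 0 < ε → ε⁻¹ * dsq (ε / 2) ≤ Mf ε - Mf (ε / 2) := by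
    intro ε hε
    have h := hPmax ε hε _ (hPD (ε / 2))
    rw [← hMfF, hFeq, ← hdsqeq] at h
    have e2 := hMfeq (ε / 2)
    have e4 : ((ε / 2)⁻¹ : ℝ) = 2 * ε⁻¹ := by
      rw [inv_div]; ring
    rw [e4] at e2
    linarith
  -- choice of a good ε
  have hgood : ∀ ε₀ > (0:ℝ), ∀ β > (0:ℝ), ∃ ε : ℝ, 0 < ε ∧ ε ≤ ε₀ ∧ Mf ε - Mf (ε / 2) < β := by
    intro ε₀ hε₀ β hβ
    by_contra hcon
    push_neg at hcon
    have hseq : ∀ n : ℕ, Mf (ε₀ / 2 ^ n) ≤ Mf ε₀ - n * β := by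
      intro n
      induction n with
      | zero => simp
      | succ n ih =>
        have hpos : (0:ℝ) < ε₀ / 2 ^ n := by positivity
        have hle : ε₀ / 2 ^ n ≤ ε₀ := by
          apply div_le_self hε₀.le
          exact one_le_pow₀ (by norm_num)
        have h1 := hcon (ε₀ / 2 ^ n) hpos hle
        have heq : ε₀ / 2 ^ (n + 1) = ε₀ / 2 ^ n / 2 := by
          rw [pow_succ]; ring
        rw [heq]
        push_cast
        linarith
    obtain ⟨n, hn⟩ := exists_nat_gt ((Mf ε₀ - (v (X s) + η * s)) / β)
    rw [div_lt_iff₀ hβ] at hn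
    have h1 := hseq n
    have h2 := hlower (ε₀ / 2 ^ n) (by positivity)
    linarith
  -- choose parameters
  set R : ℝ := min (min (r / 2) δL) (ρ / 2) with hRdef
  clear_value R
  have hR0 : 0 < R := by
    rw [hRdef]
    exact lt_min (lt_min (by linarith) hδL) (by linarith)
  have hRr : R ≤ r / 2 := hRdef ▸ ((min_le_left _ _).trans (min_le_left _ _))
  have hRδL : R ≤ δL := hRdef ▸ ((min_le_left _ _).trans (min_le_right _ _))
  have hRρ : R ≤ ρ / 2 := hRdef ▸ (min_le_right _ _)
  set β : ℝ := η / (4 * L + 2) with hβdef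
  clear_value β
  have hβ0 : 0 < β := by rw [hβdef]; positivity
  have h2Lβ : 2 * L * (2 * β) < η := by
    rw [hβdef, show 2 * L * (2 * (η / (4 * L + 2))) = 4 * L * η / (4 * L + 2) by ring,
      div_lt_iff₀ (by linarith)]
    nlinarith
  set ε₀ : ℝ := min 1 (R ^ 2 / (2 * (C + 1))) with hε₀def
  clear_value ε₀
  have hε₀0 : 0 < ε₀ := by
    rw [hε₀def]
    apply lt_min one_pos
    positivity
  have hε₀R : ε₀ ≤ R ^ 2 / (2 * (C + 1)) := hε₀def ▸ (min_le_right _ _)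
  obtain ⟨ε', hε', hε'ε₀, hgapε⟩ := hgood ε₀ hε₀0 β hβ0
  set ε : ℝ := ε' / 2 with hεdef
  clear_value ε
  have hε : 0 < ε := by rw [hεdef]; positivity
  have hεε₀ : ε ≤ ε₀ := by rw [hεdef]; linarith
  have hgapsmall : ε⁻¹ * dsq ε < 2 * β := by
    have hg := hgap ε' hε'
    rw [← hεdef] at hg
    have h2 : (ε⁻¹ : ℝ) = 2 * ε'⁻¹ := by
      rw [hεdef, inv_div]; ring
    rw [h2]
    linarith [hg, hgapε]
  -- properties of the maximizer at this ε
  set xε : E2 := (P ε).1 with hxεdef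
  set τε : ℝ := (P ε).2 with hτεdef
  set c : E2 := X τε with hcdef
  set d : ℝ := ‖xε - c‖ with hddef
  have hdsqd : dsq ε = d ^ 2 := by
    rw [hddef, hxεdef, hcdef, hτεdef, hdsqeq]
  clear_value xε τε c d
  have hd0 : 0 ≤ d := by rw [hddef]; positivity
  have hτmem : τε ∈ Icc s t := by rw [hτεdef]; exact hPτ ε
  have hdR : d < R := by
    have h1 : d ^ 2 ≤ ε * C := by rw [← hdsqd]; exact hdsqC ε hε
    have h2 : ε * C ≤ ε₀ * C := mul_le_mul_of_nonneg_right hεε₀ hC0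
    have h3 : ε₀ * C < R ^ 2 := by
      have h5 : ε₀ * C ≤ R ^ 2 / (2 * (C + 1)) * C :=
        mul_le_mul_of_nonneg_right hε₀R hC0
      have h6 : R ^ 2 / (2 * (C + 1)) * C < R ^ 2 := by
        rw [div_mul_eq_mul_div, div_lt_iff₀ (by linarith)]
        nlinarith [sq_nonneg R]
      linarith
    nlinarith [hd0, hR0, sq_nonneg (d - R), sq_nonneg (d + R)]
  have hdr : d < r / 2 := hdR.trans_le hRr
  have hdδL : d ≤ δL := (hdR.trans_le hRδL).le
  have hdρ : d < ρ := hdR.trans_le (by linarith)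
  have hxεK : xε ∈ K := by rw [hxεdef]; exact hPK ε
  have hxεΩ : xε ∈ Ω := hKsub hxεK
  have hdistxc : dist xε c = d := by rw [hddef, dist_eq_norm]
  -- viscosity inequality at the maximizer
  have hvisc : 0 ≤ (inner ℝ (b xε) ((2 * ε⁻¹) • (xε - c)) : ℝ) := by
    set φ : E2 → ℝ := fun x => ε⁻¹ * ‖x - c‖ ^ 2 with hφdef
    have hφ : ContDiff ℝ 1 φ :=
      contDiff_const.mul ((contDiff_id.sub contDiff_const).norm_sq (𝕜 := ℝ))
    have hmaxloc : IsLocalMaxOn (fun x => v x - φ x) Ω xε := by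
      have hcb : closedBall xε (r / 2) ∈ 𝓝 xε := closedBall_mem_nhds _ (by linarith)
      apply Filter.eventually_iff_exists_mem.2
      refine ⟨Ω ∩ closedBall xε (r / 2), inter_mem_nhdsWithin _ hcb, ?_⟩
      rintro x ⟨_, hx1⟩
      have hxK : x ∈ K := by
        apply hballK τε
        calc dist x (X τε) ≤ dist x xε + dist xε (X τε) := dist_triangle _ _ _
          _ ≤ r / 2 + d := by
              rw [mem_closedBall] at hx1
              rw [← hcdef, hdistxc]
              linarith
          _ ≤ r := by linarith
      have hxD : ((x, τε) : E2 × ℝ) ∈ D := hDmem x τε hxK hτmem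
      have h := hPmax ε hε _ hxD
      rw [hFeq, hFeq, ← hxεdef, ← hτεdef] at h
      simp only [hφdef, mem_setOf_eq]
      rw [hcdef]
      dsimp only at h ⊢
      linarith
    have h := hvsub φ hφ xε hxεΩ hmaxloc
    have hgrad : gradient φ xε = (2 * ε⁻¹) • (xε - c) :=
      (hasGradientAt_quad ε c xε).gradient
    rw [hgrad] at h
    linarith
  -- case analysis: the maximizing time is t
  rcases eq_or_lt_of_le hτmem.2 with hτt | hτlt
  · -- τε = t : conclude
    have h1 := hlower ε hε
    rw [hMfeq, ← hxεdef, ← hτεdef, hτt] at h1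
    have h2 : 0 ≤ ε⁻¹ * dsq ε := mul_nonneg (by positivity) (hdsq0 ε)
    have h3 : v xε < v (X t) + γ := by
      apply hρ
      have he : dist xε (X t) = d := by rw [← hτt, ← hcdef]; exact hdistxc
      rw [he]; exact hdρ
    linarith
  · -- τε < t : contradiction
    exfalso
    -- derivative of the time-marginal at τε
    have hlin : HasDerivAt (fun u : ℝ => η * u) η τε := by
      simpa using (hasDerivAt_id τε).const_mul η
    have hA : HasDerivAt (fun u : ℝ => -(ε⁻¹ * ‖xε - X u‖ ^ 2) + η * u)
        (-(ε⁻¹ * (2 * (inner ℝ (xε - c) (-(b c)) : ℝ))) + η) τε := by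
      have h1 : HasDerivAt (fun u : ℝ => xε - X u) (-(b c)) τε := by
        rw [hcdef]; exact (hX τε).const_sub xε
      have h2 := h1.norm_sq
      rw [← hcdef] at h2
      exact ((h2.const_mul ε⁻¹).neg).add hlin
    have hA' : HasDerivAt (fun u : ℝ => -(ε⁻¹ * ‖xε - X u‖ ^ 2) + η * u)
        (2 * ε⁻¹ * (inner ℝ (xε - c) (b c) : ℝ) + η) τε := by
      convert hA using 1
      rw [inner_neg_right]
      ring
    -- right-sided maximality gives derivative ≤ 0
    have hmax : ∀ u ∈ Ioc τε t, -(ε⁻¹ * ‖xε - X u‖ ^ 2) + η * u ≤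
        -(ε⁻¹ * ‖xε - X τε‖ ^ 2) + η * τε := by
      intro u hu
      have huD : ((xε, u) : E2 × ℝ) ∈ D :=
        hDmem xε u hxεK ⟨hτmem.1.trans hu.1.le, hu.2⟩
      have h := hPmax ε hε _ huD
      rw [hFeq, hFeq, ← hxεdef, ← hτεdef] at h
      dsimp only at h
      linarith
    have hderiv_le : 2 * ε⁻¹ * (inner ℝ (xε - c) (b c) : ℝ) + η ≤ 0 := by
      have hslope := hasDerivAt_iff_tendsto_slope.1 hA'
      have hmono : 𝓝[>] τε ≤ 𝓝[{τε}ᶜ] τε :=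
        nhdsWithin_mono _ (fun u hu => ne_of_gt hu)
      have hslope' := hslope.mono_left hmono
      apply le_of_tendsto hslope'
      filter_upwards [Ioc_mem_nhdsGT hτlt] with u hu
      rw [slope_def_field]
      apply div_nonpos_of_nonpos_of_nonneg
      · show (-(ε⁻¹ * ‖xε - X u‖ ^ 2) + η * u) -
          (-(ε⁻¹ * ‖xε - X τε‖ ^ 2) + η * τε) ≤ 0
        linarith [hmax u hu]
      · linarith [hu.1]
    -- combine with the viscosity inequality and the Lipschitz bound
    have hvisc' : 0 ≤ 2 * ε⁻¹ * (inner ℝ (xε - c) (b xε) : ℝ) := by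
      have h1 : (inner ℝ (b xε) ((2 * ε⁻¹) • (xε - c)) : ℝ) =
          2 * ε⁻¹ * (inner ℝ (xε - c) (b xε) : ℝ) := by
        rw [real_inner_smul_right, real_inner_comm]
      linarith [hvisc, h1 ▸ hvisc]
    have hkey : η ≤ 2 * ε⁻¹ * (inner ℝ (xε - c) (b xε - b c) : ℝ) := by
      rw [inner_sub_right]
      nlinarith [hvisc', hderiv_le]
    have hCS : (inner ℝ (xε - c) (b xε - b c) : ℝ) ≤ d * (L * d) := by
      calc (inner ℝ (xε - c) (b xε - b c) : ℝ) ≤ ‖xε - c‖ * ‖b xε - b c‖ :=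
            real_inner_le_norm _ _
        _ ≤ d * (L * d) := by
            rw [← hddef]
            apply mul_le_mul_of_nonneg_left _ hd0
            have hthis := hLip τε xε (by rw [← hcdef, hdistxc]; exact hdδL)
            rw [← hcdef, dist_eq_norm, dist_eq_norm, ← hddef] at hthis
            exact hthis
    have hfinal : η ≤ 2 * L * (ε⁻¹ * dsq ε) := by
      have h1 : 2 * ε⁻¹ * (inner ℝ (xε - c) (b xε - b c) : ℝ) ≤
          2 * ε⁻¹ * (d * (L * d)) := by
        apply mul_le_mul_of_nonneg_left hCS
        positivity
      have h2 : 2 * ε⁻¹ * (d * (L * d)) = 2 * L * (ε⁻¹ * dsq ε) := by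
        rw [hdsqd]; ring
      linarith
    have h3 : 2 * L * (ε⁻¹ * dsq ε) ≤ 2 * L * (2 * β) :=
      mul_le_mul_of_nonneg_left hgapsmall.le (by linarith)
    linarith

/-- An upper semicontinuous viscosity subsolution of `−b·Dv = 0`
(and likewise a lower semicontinuous viscosity supersolution) is constant along every
periodic orbit of the locally Lipschitz vector field `b`. -/
theorem constant_on_periodic_orbits
    (Ω : Set E2) (hΩ : IsOpen Ω)
    (b : E2 → E2)
    (hb : ∀ x ∈ Ω, ∃ K : NNReal, ∃ s ∈ nhdsWithin x Ω, LipschitzOnWith K b s)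
    (v w : E2 → ℝ)
    (hv : UpperSemicontinuousOn v Ω)
    (hvsub : ∀ φ : E2 → ℝ, ContDiff ℝ 1 φ → ∀ z ∈ Ω,
      IsLocalMaxOn (fun x => v x - φ x) Ω z →
      -(inner ℝ (b z) (gradient φ z) : ℝ) ≤ 0)
    (hw : LowerSemicontinuousOn w Ω)
    (hwsup : ∀ φ : E2 → ℝ, ContDiff ℝ 1 φ → ∀ z ∈ Ω,
      IsLocalMinOn (fun x => w x - φ x) Ω z →
      0 ≤ -(inner ℝ (b z) (gradient φ z) : ℝ))
    (X : ℝ → E2) (hXΩ : ∀ t : ℝ, X t ∈ Ω)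
    (hX : ∀ t : ℝ, HasDerivAt X (b (X t)) t)
    (T : ℝ) (hT : 0 < T) (hper : Function.Periodic X T) :
    (∀ s t : ℝ, v (X s) = v (X t)) ∧ (∀ s t : ℝ, w (X s) = w (X t)) := by
  have hmono := mono_along Ω hΩ b hb v hv hvsub X hXΩ hX T hT hper
  -- `-w` is an upper semicontinuous viscosity subsolution
  have hwusc : UpperSemicontinuousOn (fun x => -w x) Ω := by
    intro x hx y hy
    have hy' : -w x < y := hy
    have h := hw x hx (-y) (by linarith)
    filter_upwards [h] with x' hx'
    show -w x' < y
    linarith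
  have hwsub : ∀ φ : E2 → ℝ, ContDiff ℝ 1 φ → ∀ z ∈ Ω,
      IsLocalMaxOn (fun x => (fun x' => -w x') x - φ x) Ω z →
      -(inner ℝ (b z) (gradient φ z) : ℝ) ≤ 0 := by
    intro φ hφ z hz hmax
    have hmin := hmax.neg
    have heq : (fun x => -((fun x' => -w x') x - φ x)) =
        (fun x => w x - (fun y => -φ y) x) := by
      funext x; dsimp only; ring
    rw [heq] at hmin
    have h := hwsup (fun y => -φ y) hφ.neg z hz hmin
    have hg : gradient (fun y => -φ y) z = -(gradient φ z) := by
      unfold gradient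
      rw [fderiv_fun_neg, map_neg]
    rw [hg, inner_neg_right] at h
    linarith
  have hmonow := mono_along Ω hΩ b hb (fun x => -w x) hwusc hwsub X hXΩ hX T hT hper
  have hle : ∀ f : E2 → ℝ, (∀ s t : ℝ, s ≤ t → f (X s) ≤ f (X t)) →
      ∀ s t : ℝ, f (X s) ≤ f (X t) := by
    intro f hf s t
    obtain ⟨n, hn⟩ := exists_nat_gt ((s - t) / T)
    rw [div_lt_iff₀ hT] at hn
    have h1 : s ≤ t + n * T := by linarith
    have h2 := hf s (t + n * T) h1
    rwa [hper.nat_mul n t] at h2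
  constructor
  · intro s t
    exact le_antisymm (hle v hmono s t) (hle v hmono t s)
  · intro s t
    have h := le_antisymm (hle (fun x => -w x) hmonow s t) (hle (fun x => -w x) hmonow t s)
    have h' : -w (X s) = -w (X t) := h
    linarith
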